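/- Let s > 0 and let σ = (σ_k)_{k≥1} be a non-increasing sequence of positive real numbers with σ_k → 0, and define the partial sum sequence v_n = (∑_{k=1}^n σ_k^{-s})^{1/s}. Then the following are equivalent: (i) there exists a real number b > 1 such that sup{ σ_n b^n / (σ_k b^k) : k ≤ n } < ∞; (ii) there exist constants c₁, c₂ > 0 such that c₁/v_n ≤ σ_n ≤ c₂/v_n for all n ≥ 1. -/

import Mathlib

open Filter

private lemma aux_pow_rpow (x : ℝ) (hx : 0 ≤ x) (m : ℕ) (t : ℝ) :
    (x ^ m) ^ t = (x ^ t) ^ m := by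
  rw [← Real.rpow_natCast x m, ← Real.rpow_mul hx, mul_comm, Real.rpow_mul hx,
    Real.rpow_natCast]

private lemma aux_main (s : ℝ) (hs : 0 < s) (σ : ℕ → ℝ)
    (hpos : ∀ k, 1 ≤ k → 0 < σ k)
    (T : ℕ → ℝ) (hT : ∀ n, T n = ∑ k ∈ Finset.Icc 1 n, σ k ^ (-s))
    (v : ℕ → ℝ) (hv : ∀ n : ℕ, v n = T n ^ (1 / s)) :
    (∃ b : ℝ, 1 < b ∧ ∃ C : ℝ, ∀ k n : ℕ, 1 ≤ k → k ≤ n →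
        σ n * b ^ n / (σ k * b ^ k) ≤ C) ↔
    (∃ c₁ c₂ : ℝ, 0 < c₁ ∧ 0 < c₂ ∧ ∀ n : ℕ, 1 ≤ n →
        c₁ / v n ≤ σ n ∧ σ n ≤ c₂ / v n) := by
  have hs' : s ≠ 0 := ne_of_gt hs
  have hTpos : ∀ n, 1 ≤ n → 0 < T n := by
    intro n hn
    rw [hT]
    exact Finset.sum_pos
      (fun k hk => Real.rpow_pos_of_pos (hpos k (Finset.mem_Icc.mp hk).1) _)
      ⟨1, Finset.mem_Icc.mpr ⟨le_rfl, hn⟩⟩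
  have hvpos : ∀ n, 1 ≤ n → 0 < v n := fun n hn => by
    rw [hv]; exact Real.rpow_pos_of_pos (hTpos n hn) _
  have hvs : ∀ n, 1 ≤ n → (v n) ^ s = T n := by
    intro n hn
    rw [hv n, one_div, Real.rpow_inv_rpow (hTpos n hn).le hs']
  have hkey : ∀ n, 1 ≤ n → (σ n * v n) ^ s = σ n ^ s * T n := by
    intro n hn
    rw [Real.mul_rpow (hpos n hn).le (hvpos n hn).le, hvs n hn]
  have hone : ∀ n, 1 ≤ n → σ n ^ s * σ n ^ (-s) = 1 := by
    intro n hn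
    rw [← Real.rpow_add (hpos n hn), add_neg_cancel, Real.rpow_zero]
  have hT_single : ∀ n, 1 ≤ n → σ n ^ (-s) ≤ T n := by
    intro n hn
    rw [hT]
    exact Finset.single_le_sum
      (f := fun k => σ k ^ (-s))
      (fun k hk => (Real.rpow_pos_of_pos (hpos k (Finset.mem_Icc.mp hk).1) _).le)
      (Finset.mem_Icc.mpr ⟨hn, le_rfl⟩)
  constructor
  · -- (EXP) → two-sided bound
    rintro ⟨b, hb, C, hC⟩
    have hb0 : 0 < b := lt_trans one_pos hb
    have hC1 : (1 : ℝ) ≤ C := by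
      have h := hC 1 1 le_rfl le_rfl
      rwa [div_self (ne_of_gt (mul_pos (hpos 1 le_rfl) (pow_pos hb0 1)))] at h
    have hC0 : 0 < C := lt_of_lt_of_le one_pos hC1
    set r : ℝ := b ^ (-s) with hr
    have hr0 : 0 < r := Real.rpow_pos_of_pos hb0 _
    have hr1 : r < 1 := Real.rpow_lt_one_of_one_lt_of_neg hb (by linarith)
    have h1r : 0 < 1 - r := by linarith
    -- pointwise bound
    have hpt : ∀ k n : ℕ, 1 ≤ k → k ≤ n →
        σ k ^ (-s) ≤ (σ n / C) ^ (-s) * r ^ (n - k) := by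
      intro k n hk hkn
      have hn1 : 1 ≤ n := le_trans hk hkn
      have h1 : σ n * b ^ n ≤ C * (σ k * b ^ k) := by
        have h := hC k n hk hkn
        rwa [div_le_iff₀ (mul_pos (hpos k hk) (pow_pos hb0 k))] at h
      have h2 : σ n / C * b ^ (n - k) ≤ σ k := by
        rw [div_mul_eq_mul_div, div_le_iff₀ hC0, ← mul_le_mul_iff_of_pos_right (pow_pos hb0 k)]
        calc σ n * b ^ (n - k) * (b ^ k) = σ n * b ^ n := by
              rw [mul_assoc, pow_sub_mul_pow b hkn]
          _ ≤ C * (σ k * b ^ k) := h1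
          _ = σ k * C * b ^ k := by ring
      have h2pos : 0 < σ n / C * b ^ (n - k) :=
        mul_pos (div_pos (hpos n hn1) hC0) (pow_pos hb0 _)
      calc σ k ^ (-s) ≤ (σ n / C * b ^ (n - k)) ^ (-s) :=
            Real.rpow_le_rpow_of_nonpos h2pos h2 (neg_nonpos.mpr hs.le)
        _ = (σ n / C) ^ (-s) * (b ^ (n - k)) ^ (-s) :=
            Real.mul_rpow (div_pos (hpos n hn1) hC0).le (pow_pos hb0 _).le
        _ = (σ n / C) ^ (-s) * r ^ (n - k) := by
            rw [aux_pow_rpow b hb0.le (n - k) (-s)]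
    -- geometric sum bound
    have hgeom : ∀ n : ℕ, (∑ k ∈ Finset.Icc 1 n, r ^ (n - k)) ≤ 1 / (1 - r) := by
      intro n
      have heq : (∑ k ∈ Finset.Icc 1 n, r ^ (n - k)) = ∑ j ∈ Finset.range n, r ^ j := by
        rw [← Finset.Ico_add_one_right_eq_Icc, Finset.sum_Ico_eq_sum_range]
        calc (∑ i ∈ Finset.range n, r ^ (n - (1 + i)))
            = ∑ i ∈ Finset.range n, r ^ (n - 1 - i) := by
              apply Finset.sum_congr rfl
              intro i _
              congr 1
              omega
          _ = ∑ j ∈ Finset.range n, r ^ j := Finset.sum_range_reflect (fun j => r ^ j) n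
      have hrn : 0 < r ^ n := pow_pos hr0 n
      rw [heq, geom_sum_eq (ne_of_lt hr1)]
      have hED : (r ^ n - 1) / (r - 1) = (1 - r ^ n) / (1 - r) := by
        rw [← neg_sub 1 (r ^ n), ← neg_sub 1 r, neg_div_neg_eq]
      rw [hED]
      have hle : 1 - r ^ n ≤ 1 := by linarith
      exact (div_le_div_iff_of_pos_right h1r).mpr hle
    -- sum bound
    have hTle : ∀ n, 1 ≤ n → σ n ^ s * T n ≤ C ^ s * (1 / (1 - r)) := by
      intro n hn
      have hsum : T n ≤ (σ n / C) ^ (-s) * (1 / (1 - r)) := by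
        rw [hT]
        calc (∑ k ∈ Finset.Icc 1 n, σ k ^ (-s))
            ≤ ∑ k ∈ Finset.Icc 1 n, (σ n / C) ^ (-s) * r ^ (n - k) :=
              Finset.sum_le_sum (fun k hk =>
                hpt k n (Finset.mem_Icc.mp hk).1 (Finset.mem_Icc.mp hk).2)
          _ = (σ n / C) ^ (-s) * ∑ k ∈ Finset.Icc 1 n, r ^ (n - k) := by
              rw [Finset.mul_sum]
          _ ≤ (σ n / C) ^ (-s) * (1 / (1 - r)) :=
              mul_le_mul_of_nonneg_left (hgeom n)
                (Real.rpow_nonneg (div_pos (hpos n hn) hC0).le _)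
      have hexp : (σ n / C) ^ (-s) = σ n ^ (-s) * C ^ s := by
        rw [Real.div_rpow (hpos n hn).le hC0.le, Real.rpow_neg hC0.le,
          div_eq_mul_inv, inv_inv]
      calc σ n ^ s * T n ≤ σ n ^ s * ((σ n / C) ^ (-s) * (1 / (1 - r))) :=
            mul_le_mul_of_nonneg_left hsum (Real.rpow_nonneg (hpos n hn).le _)
        _ = (σ n ^ s * σ n ^ (-s)) * (C ^ s * (1 / (1 - r))) := by
            rw [hexp]; ring
        _ = C ^ s * (1 / (1 - r)) := by rw [hone n hn, one_mul]
    -- assemble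
    set c₂ : ℝ := C * (1 / (1 - r)) ^ (1 / s) with hc₂def
    have hc₂pos : 0 < c₂ :=
      mul_pos hC0 (Real.rpow_pos_of_pos (by positivity) _)
    have hc₂s : c₂ ^ s = C ^ s * (1 / (1 - r)) := by
      rw [hc₂def, Real.mul_rpow hC0.le (Real.rpow_nonneg (by positivity) _),
        one_div s, Real.rpow_inv_rpow (by positivity) hs']
    refine ⟨1, c₂, one_pos, hc₂pos, fun n hn => ?_⟩
    have hσv : 0 < σ n * v n := mul_pos (hpos n hn) (hvpos n hn)
    constructor
    · rw [div_le_iff₀ (hvpos n hn)]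
      have h1 : (1 : ℝ) ^ s ≤ (σ n * v n) ^ s := by
        rw [Real.one_rpow, hkey n hn]
        calc (1 : ℝ) = σ n ^ s * σ n ^ (-s) := (hone n hn).symm
          _ ≤ σ n ^ s * T n :=
            mul_le_mul_of_nonneg_left (hT_single n hn)
              (Real.rpow_nonneg (hpos n hn).le _)
      have := (Real.rpow_le_rpow_iff (by norm_num) hσv.le hs).mp h1
      linarith
    · rw [le_div_iff₀ (hvpos n hn)]
      refine (Real.rpow_le_rpow_iff hσv.le hc₂pos.le hs).mp ?_
      rw [hkey n hn, hc₂s]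
      exact hTle n hn
  · -- two-sided bound → (EXP)
    rintro ⟨c₁, c₂, hc₁, hc₂, h⟩
    have hub : ∀ n, 1 ≤ n → σ n ^ s * T n ≤ c₂ ^ s := by
      intro n hn
      have h2 := (h n hn).2
      rw [le_div_iff₀ (hvpos n hn)] at h2
      have h3 := Real.rpow_le_rpow (mul_pos (hpos n hn) (hvpos n hn)).le h2 hs.le
      rwa [hkey n hn] at h3
    have hlb : ∀ n, 1 ≤ n → c₁ ^ s ≤ σ n ^ s * T n := by
      intro n hn
      have h2 := (h n hn).1
      rw [div_le_iff₀ (hvpos n hn)] at h2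
      have h3 := Real.rpow_le_rpow hc₁.le h2 hs.le
      rwa [Real.mul_rpow (hpos n hn).le (hvpos n hn).le, hvs n hn] at h3
    set A : ℝ := (max c₂ 2) ^ s with hAdef
    have hmax1 : (1 : ℝ) < max c₂ 2 := lt_of_lt_of_le one_lt_two (le_max_right _ _)
    have hA1 : 1 < A :=
      (Real.one_lt_rpow_iff_of_pos (by linarith)).mpr (Or.inl ⟨hmax1, hs⟩)
    have hA0 : 0 < A := lt_trans one_pos hA1
    have hubA : ∀ n, 1 ≤ n → σ n ^ s * T n ≤ A := fun n hn =>
      (hub n hn).trans (Real.rpow_le_rpow hc₂.le (le_max_left _ _) hs.le)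
    have hA1' : 0 < A - 1 := by linarith
    -- geometric growth of T
    have hstep : ∀ m : ℕ, A * T m ≤ (A - 1) * T (m + 1) := by
      intro m
      have hm1 : 1 ≤ m + 1 := Nat.le_add_left 1 m
      have hσs : 0 < σ (m + 1) ^ s := Real.rpow_pos_of_pos (hpos _ hm1) _
      have hrec : T (m + 1) = T m + σ (m + 1) ^ (-s) := by
        rw [hT, hT]
        exact Finset.sum_Icc_succ_top hm1 _
      have h1 : T (m + 1) ≤ A * σ (m + 1) ^ (-s) := by
        rw [Real.rpow_neg (hpos _ hm1).le, ← div_eq_mul_inv, le_div_iff₀ hσs]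
        have := hubA (m + 1) hm1
        linarith [mul_comm (T (m + 1)) (σ (m + 1) ^ s)]
      have hsub : σ (m + 1) ^ (-s) = T (m + 1) - T m := by rw [hrec]; ring
      rw [hsub] at h1
      nlinarith
    set q : ℝ := A / (A - 1) with hqdef
    have hq1 : 1 < q := (one_lt_div hA1').mpr (by linarith)
    have hq0 : 0 < q := lt_trans one_pos hq1
    have hstep' : ∀ m : ℕ, q * T m ≤ T (m + 1) := by
      intro m
      rw [hqdef, div_mul_eq_mul_div, div_le_iff₀ hA1']
      calc A * T m ≤ (A - 1) * T (m + 1) := hstep m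
        _ = T (m + 1) * (A - 1) := by ring
    have hiter : ∀ k j : ℕ, q ^ j * T k ≤ T (k + j) := by
      intro k j
      induction j with
      | zero => simp
      | succ j ih =>
        calc q ^ (j + 1) * T k = q * (q ^ j * T k) := by ring
          _ ≤ q * T (k + j) := mul_le_mul_of_nonneg_left ih hq0.le
          _ ≤ T (k + j + 1) := hstep' (k + j)
    -- conclude
    have hACpos : 0 < A / c₁ ^ s := div_pos hA0 (Real.rpow_pos_of_pos hc₁ _)
    set b : ℝ := q ^ (1 / s) with hbdef
    set C : ℝ := (A / c₁ ^ s) ^ (1 / s) with hCdef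
    have hb1 : 1 < b :=
      (Real.one_lt_rpow_iff_of_pos hq0).mpr (Or.inl ⟨hq1, by positivity⟩)
    have hb0 : 0 < b := lt_trans one_pos hb1
    have hbs : b ^ s = q := by
      rw [hbdef, one_div, Real.rpow_inv_rpow hq0.le hs']
    have hbn : ∀ m : ℕ, ((b ^ m : ℝ)) ^ s = q ^ m := fun m => by
      rw [aux_pow_rpow b hb0.le m s, hbs]
    have hCpos : 0 < C := Real.rpow_pos_of_pos hACpos _
    have hCs : C ^ s = A / c₁ ^ s := by
      rw [hCdef, one_div, Real.rpow_inv_rpow hACpos.le hs']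
    refine ⟨b, hb1, C, fun k n hk hkn => ?_⟩
    have hn1 : 1 ≤ n := le_trans hk hkn
    have hnum : 0 < σ n * b ^ n := mul_pos (hpos n hn1) (pow_pos hb0 n)
    have hden : 0 < σ k * b ^ k := mul_pos (hpos k hk) (pow_pos hb0 k)
    refine (Real.rpow_le_rpow_iff (div_pos hnum hden).le hCpos.le hs).mp ?_
    rw [Real.div_rpow hnum.le hden.le, Real.mul_rpow (hpos n hn1).le (pow_pos hb0 n).le,
      Real.mul_rpow (hpos k hk).le (pow_pos hb0 k).le, hbn n, hbn k, hCs,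
      div_le_div_iff₀ (mul_pos (Real.rpow_pos_of_pos (hpos k hk) s) (pow_pos hq0 k))
        (Real.rpow_pos_of_pos hc₁ s)]
    -- goal: σ n ^ s * q ^ n * c₁ ^ s ≤ A * (σ k ^ s * q ^ k)
    have hTn : q ^ (n - k) * T k ≤ T n := by
      have h5 := hiter k (n - k)
      rwa [Nat.add_sub_cancel' hkn] at h5
    have e1 : σ n ^ s * q ^ (n - k) * T k ≤ A := by
      calc σ n ^ s * q ^ (n - k) * T k = σ n ^ s * (q ^ (n - k) * T k) := by ring
        _ ≤ σ n ^ s * T n :=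
          mul_le_mul_of_nonneg_left hTn (Real.rpow_nonneg (hpos n hn1).le _)
        _ ≤ A := hubA n hn1
    have e2 : σ n ^ s * q ^ (n - k) * c₁ ^ s ≤ A * σ k ^ s := by
      calc σ n ^ s * q ^ (n - k) * c₁ ^ s
          ≤ σ n ^ s * q ^ (n - k) * (σ k ^ s * T k) :=
            mul_le_mul_of_nonneg_left (hlb k hk)
              (mul_nonneg (Real.rpow_nonneg (hpos n hn1).le _) (pow_nonneg hq0.le _))
        _ = (σ n ^ s * q ^ (n - k) * T k) * σ k ^ s := by ring
        _ ≤ A * σ k ^ s :=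
            mul_le_mul_of_nonneg_right e1 (Real.rpow_nonneg (hpos k hk).le _)
    have e3 := mul_le_mul_of_nonneg_right e2 (pow_nonneg hq0.le k)
    have hqnk : q ^ (n - k) * q ^ k = q ^ n := pow_sub_mul_pow q hkn
    calc σ n ^ s * q ^ n * c₁ ^ s = σ n ^ s * q ^ (n - k) * c₁ ^ s * q ^ k := by
          rw [← hqnk]; ring
      _ ≤ A * σ k ^ s * q ^ k := e3
      _ = A * (σ k ^ s * q ^ k) := by ring

/-- **Lemma (EXP sequences), (i) ⟺ (iii).**
For `s > 0` and a non-increasing positive sequence `σ` (indexed from 1) tending to zero,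
with partial sum sequence `v_n = (∑_{k=1}^n σ_k^{-s})^{1/s}`, the condition (EXP) is
equivalent to `σ_n ≍ 1 / v_n`. -/
theorem statement12 (s : ℝ) (hs : 0 < s) (σ : ℕ → ℝ)
    (hpos : ∀ k, 1 ≤ k → 0 < σ k)
    (hanti : ∀ m n : ℕ, 1 ≤ m → m ≤ n → σ n ≤ σ m)
    (hlim : Tendsto σ atTop (nhds 0))
    (v : ℕ → ℝ)
    (hv : ∀ n : ℕ, v n = (∑ k ∈ Finset.Icc 1 n, σ k ^ (-s)) ^ (1 / s)) :
    (∃ b : ℝ, 1 < b ∧ ∃ C : ℝ, ∀ k n : ℕ, 1 ≤ k → k ≤ n →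
        σ n * b ^ n / (σ k * b ^ k) ≤ C) ↔
    (∃ c₁ c₂ : ℝ, 0 < c₁ ∧ 0 < c₂ ∧ ∀ n : ℕ, 1 ≤ n →
        c₁ / v n ≤ σ n ∧ σ n ≤ c₂ / v n) := by
  exact aux_main s hs σ hpos (fun n => ∑ k ∈ Finset.Icc 1 n, σ k ^ (-s))
    (fun n => rfl) v hv
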